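/- Let ρ be a density matrix on ℂ^N and H a Hermitian N×N complex matrix. Then Re tr[ρ² H²] − Re tr[(ρH)²] ≤ Re tr[ρ H²] − (Re tr[ρH])², i.e. √(tr[ρ²H² − (ρH)²]) ≤ ΔE, where ΔE is the standard deviation of H in the state ρ. -/

import Mathlib

open Matrix ComplexOrder

/-- A density matrix: Hermitian (implied by positive semidefiniteness),
positive semidefinite, and of unit trace. -/
def IsDensityMatrix {N : ℕ} (ρ : Matrix (Fin N) (Fin N) ℂ) : Prop :=
  ρ.IsHermitian ∧ ρ.PosSemidef ∧ ρ.trace = 1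

section Aux

variable {N : ℕ}

open scoped MatrixOrder in
lemma psd_eq_conjTranspose_mul_self' {P : Matrix (Fin N) (Fin N) ℂ} (hP : P.PosSemidef) :
    ∃ B : Matrix (Fin N) (Fin N) ℂ, P = Bᴴ * B :=
  CStarAlgebra.nonneg_iff_eq_star_mul_self.mp hP.nonneg

open scoped MatrixOrder in
lemma psd_exists_sqrt' {P : Matrix (Fin N) (Fin N) ℂ} (hP : P.PosSemidef) :
    ∃ S : Matrix (Fin N) (Fin N) ℂ, S * S = P ∧ S.IsHermitian :=
  ⟨CFC.sqrt P, CFC.sqrt_mul_sqrt_self P hP.nonneg, (CFC.sqrt_nonneg P).posSemidef.isHermitian⟩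

lemma re_trace_conjTranspose_mul_self_nonneg (M : Matrix (Fin N) (Fin N) ℂ) :
    0 ≤ ((Mᴴ * M).trace).re := by
  have h : ((Mᴴ * M).trace).re = ∑ i, ∑ j, Complex.normSq (M j i) := by
    simp [Matrix.trace, Matrix.mul_apply, Matrix.conjTranspose_apply, Complex.re_sum,
      Complex.normSq_apply]
  rw [h]
  exact Finset.sum_nonneg fun i _ => Finset.sum_nonneg fun j _ => Complex.normSq_nonneg _

lemma re_trace_psd_mul_psd_nonneg {P Q : Matrix (Fin N) (Fin N) ℂ}
    (hP : P.PosSemidef) (hQ : Q.PosSemidef) : 0 ≤ ((P * Q).trace).re := by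
  obtain ⟨B, rfl⟩ := psd_eq_conjTranspose_mul_self' hP
  obtain ⟨C, rfl⟩ := psd_eq_conjTranspose_mul_self' hQ
  have h : ((Bᴴ * B) * (Cᴴ * C)).trace = (((C * Bᴴ)ᴴ) * (C * Bᴴ)).trace := by
    rw [conjTranspose_mul, conjTranspose_conjTranspose]
    rw [show (B * Cᴴ) * (C * Bᴴ) = (B * (Cᴴ * C)) * Bᴴ by noncomm_ring,
      Matrix.trace_mul_comm, ← Matrix.mul_assoc]
    exact Matrix.trace_mul_cycle _ _ _
  rw [h]
  exact re_trace_conjTranspose_mul_self_nonneg _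

/-- ρ - ρ² is positive semidefinite for a density matrix. -/
lemma psd_rho_sub_sq {ρ : Matrix (Fin N) (Fin N) ℂ} (hHerm : ρ.IsHermitian)
    (hPSD : ρ.PosSemidef) (hTr : ρ.trace = 1) : (ρ - ρ * ρ).PosSemidef := by
  classical
  set U : Matrix (Fin N) (Fin N) ℂ := (hHerm.eigenvectorUnitary : Matrix (Fin N) (Fin N) ℂ)
  set d : Fin N → ℝ := hHerm.eigenvalues
  have hU1 : star U * U = 1 := Unitary.coe_star_mul_self hHerm.eigenvectorUnitary
  have hU2 : U * star U = 1 := Unitary.coe_mul_star_self hHerm.eigenvectorUnitary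
  have spec : ρ = U * Matrix.diagonal (Complex.ofReal ∘ d) * star U := hHerm.spectral_theorem
  -- sum of eigenvalues is the trace
  have htr : ∑ i, (d i : ℂ) = 1 := by
    have : ρ.trace = ∑ i, (d i : ℂ) := by
      conv_lhs => rw [spec]
      rw [Matrix.trace_mul_comm, ← Matrix.mul_assoc, hU1, Matrix.one_mul, Matrix.trace_diagonal]
      rfl
    rw [← this, hTr]
  have hsum : ∑ i, d i = 1 := by
    have := congrArg Complex.re htr
    simpa [Complex.re_sum] using this
  have hd0 : ∀ i, 0 ≤ d i := hPSD.eigenvalues_nonneg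
  have hd1 : ∀ i, d i ≤ 1 := by
    intro i
    calc d i ≤ ∑ j, d j := Finset.single_le_sum (fun j _ => hd0 j) (Finset.mem_univ i)
    _ = 1 := hsum
  set D : Matrix (Fin N) (Fin N) ℂ := Matrix.diagonal (Complex.ofReal ∘ d) with hD_def
  have hsq : ρ * ρ = U * (D * D) * star U := by
    conv_lhs => rw [spec]
    rw [show (U * D * star U) * (U * D * star U)
        = U * D * (star U * U) * (D * star U) by noncomm_ring, hU1, Matrix.mul_one]
    noncomm_ring
  have hDD : D - D * D = Matrix.diagonal (fun i => (d i : ℂ) - (d i : ℂ) * (d i : ℂ)) := by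
    rw [hD_def, Matrix.diagonal_mul_diagonal, Matrix.diagonal_sub]
    congr 1
  have hdiff : ρ - ρ * ρ
      = U * Matrix.diagonal (fun i => (d i : ℂ) - (d i : ℂ) * (d i : ℂ)) * star U := by
    rw [← hDD, show U * (D - D * D) * star U = U * D * star U - U * (D * D) * star U
      by noncomm_ring, ← spec, ← hsq]
  rw [hdiff, show star U = Uᴴ from rfl]
  refine PosSemidef.mul_mul_conjTranspose_same ?_ U
  refine Matrix.PosSemidef.diagonal ?_
  intro i
  simp only [Pi.zero_apply]
  rw [← Complex.ofReal_mul, ← Complex.ofReal_sub, Complex.zero_le_real]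
  nlinarith [hd0 i, hd1 i]

end Aux

theorem Q_le_variance (N : ℕ)
    (ρ H : Matrix (Fin N) (Fin N) ℂ)
    (hρ : IsDensityMatrix ρ) (hH : H.IsHermitian) :
    (ρ * ρ * (H * H)).trace.re - (ρ * H * (ρ * H)).trace.re ≤
      (ρ * (H * H)).trace.re - ((ρ * H).trace.re) ^ 2 := by
  classical
  obtain ⟨hHerm, hPSD, hTr⟩ := hρ
  -- the expectation value is real
  set c : ℂ := (ρ * H).trace with hc_def
  have hc_star : star c = c := by
    have h1 : (ρ * H)ᴴ = H * ρ := by rw [conjTranspose_mul, hHerm.eq, hH.eq]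
    calc star c = ((ρ * H)ᴴ).trace := (Matrix.trace_conjTranspose _).symm
    _ = c := by rw [h1, Matrix.trace_mul_comm]
  have hc_im : c.im = 0 := by
    have := congrArg Complex.im hc_star
    simp at this
    linarith
  -- centered observable
  set A : Matrix (Fin N) (Fin N) ℂ := H - c • 1 with hA_def
  have hA_herm : A.IsHermitian := by
    unfold Matrix.IsHermitian
    rw [hA_def, conjTranspose_sub, hH.eq, conjTranspose_smul, conjTranspose_one, hc_star]
  -- A * A expansion
  have hAA : A * A = H * H - (2 * c) • H + (c * c) • 1 := by
    rw [hA_def, Matrix.sub_mul, Matrix.mul_sub, Matrix.mul_sub]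
    simp only [Matrix.smul_mul, Matrix.mul_smul, Matrix.mul_one, Matrix.one_mul, smul_smul]
    module
  -- generic expansion of trace (M * (A * A))
  have expand : ∀ M : Matrix (Fin N) (Fin N) ℂ,
      (M * (A * A)).trace = (M * (H * H)).trace - 2 * c * (M * H).trace + c * c * M.trace := by
    intro M
    rw [hAA, Matrix.mul_add, Matrix.mul_sub, Matrix.mul_smul, Matrix.mul_smul, Matrix.mul_one,
      Matrix.trace_add, Matrix.trace_sub, Matrix.trace_smul, Matrix.trace_smul]
    simp [smul_eq_mul]
  -- expansion of trace ((ρ*A)*(ρ*A))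
  have expand2 : ((ρ * A) * (ρ * A)).trace
      = (ρ * H * (ρ * H)).trace - 2 * c * (ρ * ρ * H).trace + c * c * (ρ * ρ).trace := by
    have hρA : ρ * A = ρ * H - c • ρ := by
      rw [hA_def, Matrix.mul_sub, Matrix.mul_smul, Matrix.mul_one]
    have hexp : (ρ * H - c • ρ) * (ρ * H - c • ρ)
        = ρ * H * (ρ * H) - c • (ρ * H * ρ) - c • (ρ * (ρ * H)) + (c * c) • (ρ * ρ) := by
      simp only [Matrix.sub_mul, Matrix.mul_sub, Matrix.smul_mul, Matrix.mul_smul, smul_smul]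
      module
    have h1 : (ρ * H * ρ).trace = (ρ * ρ * H).trace := by
      rw [Matrix.trace_mul_comm, ← Matrix.mul_assoc]
    have h2 : (ρ * (ρ * H)).trace = (ρ * ρ * H).trace := by
      rw [← Matrix.mul_assoc]
    rw [hρA, hexp, Matrix.trace_add, Matrix.trace_sub, Matrix.trace_sub,
      Matrix.trace_smul, Matrix.trace_smul, Matrix.trace_smul, h1, h2]
    simp [smul_eq_mul]
    ring
  -- square root of ρ
  obtain ⟨S, hS2, hS_herm⟩ := psd_exists_sqrt' hPSD
  have hB_herm : (S * A * S).IsHermitian := by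
    unfold Matrix.IsHermitian
    rw [conjTranspose_mul, conjTranspose_mul, hS_herm.eq, hA_herm.eq]
    noncomm_ring
  -- the middle trace identity
  have mid : (((S * A * S)ᴴ) * (S * A * S)).trace = ((ρ * A) * (ρ * A)).trace := by
    rw [hB_herm.eq]
    rw [show (S * A * S) * (S * A * S) = S * (A * ((S * S) * (A * S))) by noncomm_ring, hS2]
    rw [Matrix.trace_mul_comm]
    rw [show (A * (ρ * (A * S))) * S = A * (ρ * (A * (S * S))) by noncomm_ring, hS2]
    rw [Matrix.trace_mul_comm]
    noncomm_ring
  -- nonnegativity of both terms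
  have nonneg1 : 0 ≤ (((ρ - ρ * ρ) * (A * A)).trace).re := by
    refine re_trace_psd_mul_psd_nonneg (psd_rho_sub_sq hHerm hPSD hTr) ?_
    have : A * A = Aᴴ * A := by rw [hA_herm.eq]
    rw [this]
    exact Matrix.posSemidef_conjTranspose_mul_self A
  have nonneg2 : 0 ≤ ((((S * A * S)ᴴ) * (S * A * S)).trace).re :=
    re_trace_conjTranspose_mul_self_nonneg _
  -- key complex identity
  have key : ((ρ - ρ * ρ) * (A * A)).trace + (((S * A * S)ᴴ) * (S * A * S)).trace
      = (ρ * (H * H)).trace - c * c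
        - ((ρ * ρ * (H * H)).trace - (ρ * H * (ρ * H)).trace) := by
    rw [mid, expand2, Matrix.sub_mul, Matrix.trace_sub, expand, expand, hTr, hc_def]
    ring
  -- take real parts
  have keyre := congrArg Complex.re key
  rw [Complex.add_re, Complex.sub_re, Complex.sub_re, Complex.sub_re, Complex.mul_re,
    hc_im] at keyre
  have hcre : (c.re) ^ 2 = c.re * c.re - 0 * 0 := by ring
  rw [hc_def] at hc_im
  nlinarith [nonneg1, nonneg2, keyre]
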